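/- Let m, n ≥ 1 and let c : Fin m × Fin n → ℝ be an arbitrary cost function. Then there exists a coupling γ of the uniform measures (a matrix γ : Fin m → Fin n → ℝ with γ(i,j) ≥ 0 for all i,j, ∑_j γ(i,j) = 1/m for every i, and ∑_i γ(i,j) = 1/n for every j) such that γ minimizes the Kantorovich cost ∑_{i,j} c(i,j) γ(i,j) among all such couplings and every entry of γ is an integer multiple of gcd(m,n)/(m·n), i.e., for every (i,j) there exists a natural number k with γ(i,j) = k · gcd(m,n)/(m·n). -/

import Mathlib

open Finset

/-- Summing a function of the first coordinate over `Fin (m*u)`. -/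
lemma kq_sum_fst {m u : ℕ} (f : Fin m → ℝ) :
    ∑ a : Fin (m * u), f (finProdFinEquiv.symm a).1 = u * ∑ i, f i := by
  rw [← Equiv.sum_comp (finProdFinEquiv : Fin m × Fin u ≃ Fin (m*u))
    (fun a => f (finProdFinEquiv.symm a).1)]
  simp [Fintype.sum_prod_type, Finset.sum_mul, mul_comm]

/-- There is an optimal coupling of the uniform measures on `m` and `n` points
all of whose entries are integer multiples of `gcd(m,n) / (m * n)`. -/
theorem kantorovich_quantized_solution
    (m n : ℕ) (hm : 1 ≤ m) (hn : 1 ≤ n) (c : Fin m × Fin n → ℝ) :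
    ∃ γ : Fin m → Fin n → ℝ,
      (∀ i j, 0 ≤ γ i j) ∧
      (∀ i, ∑ j, γ i j = 1 / m) ∧
      (∀ j, ∑ i, γ i j = 1 / n) ∧
      (∀ γ' : Fin m → Fin n → ℝ,
        (∀ i j, 0 ≤ γ' i j) →
        (∀ i, ∑ j, γ' i j = 1 / m) →
        (∀ j, ∑ i, γ' i j = 1 / n) →
        ∑ i, ∑ j, c (i, j) * γ i j ≤ ∑ i, ∑ j, c (i, j) * γ' i j) ∧
      (∀ i j, ∃ k : ℕ, γ i j = (k : ℝ) * (Nat.gcd m n : ℝ) / ((m : ℝ) * n)) := by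
  set g := Nat.gcd m n with hgdef
  have hg : 0 < g := Nat.gcd_pos_of_pos_left n (by omega)
  set u := n / g with hudef
  set v := m / g with hvdef
  have hu : g * u = n := Nat.mul_div_cancel' (Nat.gcd_dvd_right m n)
  have hv : g * v = m := Nat.mul_div_cancel' (Nat.gcd_dvd_left m n)
  have hu0 : 0 < u := by
    rw [hudef]; exact Nat.div_pos (Nat.le_of_dvd (by omega) (Nat.gcd_dvd_right m n)) hg
  have hv0 : 0 < v := by
    rw [hvdef]; exact Nat.div_pos (Nat.le_of_dvd (by omega) (Nat.gcd_dvd_left m n)) hg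
  have h1 : m * u = n * v := by
    calc m * u = g * v * u := by rw [hv]
    _ = (g * u) * v := by ring
    _ = n * v := by rw [hu]
  set L := m * u with hLdef
  have hL0 : 0 < L := by positivity
  have hLg : L * g = m * n := by
    calc L * g = m * (g * u) := by rw [hLdef]; ring
    _ = m * n := by rw [hu]
  -- real cast facts
  have hmR : (m : ℝ) ≠ 0 := by positivity
  have hnR : (n : ℝ) ≠ 0 := by positivity
  have hLR : (L : ℝ) ≠ 0 := by positivity
  have hLgR : (L : ℝ) * g = (m : ℝ) * n := by exact_mod_cast congrArg (Nat.cast : ℕ → ℝ) hLg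
  have hLmu : (L : ℝ) = (m : ℝ) * u := by rw [hLdef]; push_cast; ring
  have hLnv : (L : ℝ) = (n : ℝ) * v := by rw [h1]; push_cast; ring
  -- projections
  set π : Fin L → Fin m := fun a => (finProdFinEquiv.symm a).1 with hπdef
  set ρ : Fin L → Fin n := fun a =>
    (finProdFinEquiv.symm (finCongr h1 a)).1 with hρdef
  have hsumπ : ∀ f : Fin m → ℝ, ∑ a : Fin L, f (π a) = u * ∑ i, f i := fun f => kq_sum_fst f
  have hsumρ : ∀ f : Fin n → ℝ, ∑ a : Fin L, f (ρ a) = v * ∑ j, f j := by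
    intro f
    rw [← Equiv.sum_comp (finCongr h1).symm (fun a => f (ρ a))]
    simpa [hρdef] using kq_sum_fst (m := n) (u := v) f
  -- choose the best permutation
  obtain ⟨σ, -, hσ⟩ := Finset.exists_min_image Finset.univ
    (fun σ : Equiv.Perm (Fin L) => ∑ a, c (π a, ρ (σ a))) ⟨1, Finset.mem_univ 1⟩
  -- the coupling
  set γ : Fin m → Fin n → ℝ := fun i j =>
    (∑ a : Fin L, if π a = i ∧ ρ (σ a) = j then (1:ℝ) else 0) / L with hγdef
  have hγnn : ∀ i j, 0 ≤ γ i j := by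
    intro i j
    apply div_nonneg _ (by positivity)
    apply Finset.sum_nonneg
    intro a _
    split <;> norm_num
  have hrow : ∀ i, ∑ j, γ i j = 1 / m := by
    intro i
    rw [hγdef]
    simp only [← Finset.sum_div]
    rw [Finset.sum_comm]
    have : ∀ a : Fin L, (∑ j, if π a = i ∧ ρ (σ a) = j then (1:ℝ) else 0)
        = if π a = i then 1 else 0 := by
      intro a
      simp [ite_and]
    rw [Finset.sum_congr rfl (fun a _ => this a)]
    rw [hsumπ (fun i' => if i' = i then (1:ℝ) else 0)]
    simp only [Finset.sum_ite_eq', Finset.mem_univ, if_true]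
    rw [mul_one]
    rw [div_eq_div_iff hLR hmR]
    rw [hLmu]; ring
  have hcol : ∀ j, ∑ i, γ i j = 1 / n := by
    intro j
    rw [hγdef]
    simp only [← Finset.sum_div]
    rw [Finset.sum_comm]
    have : ∀ a : Fin L, (∑ i, if π a = i ∧ ρ (σ a) = j then (1:ℝ) else 0)
        = if ρ (σ a) = j then 1 else 0 := by
      intro a
      simp [ite_and]
    rw [Finset.sum_congr rfl (fun a _ => this a)]
    rw [Equiv.sum_comp σ (fun a => if ρ a = j then (1:ℝ) else 0)]
    rw [hsumρ (fun j' => if j' = j then (1:ℝ) else 0)]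
    simp only [Finset.sum_ite_eq', Finset.mem_univ, if_true]
    rw [mul_one]
    rw [div_eq_div_iff hLR hnR]
    rw [hLnv]; ring
  -- cost of γ
  have hcost : ∑ i, ∑ j, c (i, j) * γ i j = (∑ a, c (π a, ρ (σ a))) / L := by
    have step1 : ∀ a : Fin L, c (π a, ρ (σ a))
        = ∑ i, ∑ j, c (i, j) * (if π a = i ∧ ρ (σ a) = j then (1:ℝ) else 0) := by
      intro a
      simp [ite_and, mul_ite, mul_zero, Finset.sum_ite_eq, Finset.sum_ite_eq']
    have hkey : ∑ a, c (π a, ρ (σ a))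
        = ∑ i, ∑ j, c (i, j) * ∑ a, (if π a = i ∧ ρ (σ a) = j then (1:ℝ) else 0) :=
      calc ∑ a, c (π a, ρ (σ a))
        = ∑ a, ∑ i, ∑ j, c (i, j) * (if π a = i ∧ ρ (σ a) = j then (1:ℝ) else 0) :=
          Finset.sum_congr rfl fun a _ => step1 a
      _ = ∑ i, ∑ a, ∑ j, c (i, j) * (if π a = i ∧ ρ (σ a) = j then (1:ℝ) else 0) :=
          Finset.sum_comm
      _ = ∑ i, ∑ j, ∑ a, c (i, j) * (if π a = i ∧ ρ (σ a) = j then (1:ℝ) else 0) :=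
          Finset.sum_congr rfl fun i _ => Finset.sum_comm
      _ = ∑ i, ∑ j, c (i, j) * ∑ a, (if π a = i ∧ ρ (σ a) = j then (1:ℝ) else 0) := by
          simp only [Finset.mul_sum]
    simp only [hγdef, ← mul_div_assoc, ← Finset.sum_div]
    rw [← hkey]
  refine ⟨γ, hγnn, hrow, hcol, ?_, ?_⟩
  · -- optimality
    intro γ' hnn' hrow' hcol'
    set M : Matrix (Fin L) (Fin L) ℝ := fun a b => ((m : ℝ) * n / L) * γ' (π a) (ρ b) with hMdef
    have hM : M ∈ doublyStochastic ℝ (Fin L) := by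
      rw [mem_doublyStochastic_iff_sum]
      refine ⟨fun a b => by
        apply mul_nonneg _ (hnn' _ _); positivity, fun a => ?_, fun b => ?_⟩
      · rw [← Finset.mul_sum, hsumρ (fun j => γ' (π a) j), hrow' (π a), hLnv]
        field_simp
      · rw [← Finset.mul_sum, hsumπ (fun i => γ' i (ρ b)), hcol' (ρ b), hLmu]
        field_simp
    obtain ⟨w, hw0, hw1, hwM⟩ := exists_eq_sum_perm_of_mem_doublyStochastic hM
    -- the value of the big linear functional on M
    have hMab : ∀ a b, M a b = ∑ τ : Equiv.Perm (Fin L), w τ * (if τ a = b then (1:ℝ) else 0) := by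
      intro a b
      have := congrFun (congrFun hwM a) b
      rw [← this]
      simp [Matrix.sum_apply, Equiv.Perm.permMatrix, PEquiv.toMatrix_apply,
        Equiv.toPEquiv_apply]
    have hΦ : ∑ a, ∑ b, c (π a, ρ b) * M a b
        = ∑ τ : Equiv.Perm (Fin L), w τ * ∑ a, c (π a, ρ (τ a)) := by
      have hinner : ∀ a, ∑ b, c (π a, ρ b) * M a b
          = ∑ τ : Equiv.Perm (Fin L), w τ * c (π a, ρ (τ a)) := by
        intro a
        simp only [hMab, Finset.mul_sum]
        rw [Finset.sum_comm]
        refine Finset.sum_congr rfl fun τ _ => ?_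
        simp [mul_ite, mul_zero, mul_one, Finset.sum_ite_eq, mul_comm]
      calc ∑ a, ∑ b, c (π a, ρ b) * M a b
          = ∑ a, ∑ τ : Equiv.Perm (Fin L), w τ * c (π a, ρ (τ a)) :=
            Finset.sum_congr rfl fun a _ => hinner a
        _ = ∑ τ : Equiv.Perm (Fin L), ∑ a, w τ * c (π a, ρ (τ a)) := Finset.sum_comm
        _ = ∑ τ : Equiv.Perm (Fin L), w τ * ∑ a, c (π a, ρ (τ a)) := by
            simp only [Finset.mul_sum]
    have hΦ' : ∑ a, ∑ b, c (π a, ρ b) * M a b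
        = (L : ℝ) * ∑ i, ∑ j, c (i, j) * γ' i j := by
      simp only [hMdef]
      have : ∀ a, ∑ b, c (π a, ρ b) * ((m : ℝ) * n / L * γ' (π a) (ρ b))
          = ((m : ℝ) * n / L) * (v * ∑ j, c (π a, j) * γ' (π a) j) := by
        intro a
        rw [← hsumρ (fun j => c (π a, j) * γ' (π a) j)]
        rw [Finset.mul_sum]
        refine Finset.sum_congr rfl fun b _ => by ring
      rw [Finset.sum_congr rfl fun a _ => this a]
      simp only [← Finset.mul_sum]
      rw [hsumπ (fun i => ∑ j, c (i, j) * γ' i j)]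
      have key : (m : ℝ) * n * (v * u) = (L : ℝ) * L := by
        nth_rewrite 1 [hLmu]
        nth_rewrite 1 [hLnv]
        ring
      rw [div_mul_eq_mul_div, div_eq_iff hLR]
      linear_combination (∑ i, ∑ j, c (i, j) * γ' i j) * key
    have hlower : (∑ a, c (π a, ρ (σ a))) ≤ ∑ a, ∑ b, c (π a, ρ b) * M a b := by
      rw [hΦ]
      calc (∑ a, c (π a, ρ (σ a)))
          = ∑ τ : Equiv.Perm (Fin L), w τ * ∑ a, c (π a, ρ (σ a)) := by
            rw [← Finset.sum_mul, hw1, one_mul]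
        _ ≤ ∑ τ : Equiv.Perm (Fin L), w τ * ∑ a, c (π a, ρ (τ a)) := by
            refine Finset.sum_le_sum fun τ _ => ?_
            exact mul_le_mul_of_nonneg_left (hσ τ (Finset.mem_univ τ)) (hw0 τ)
    rw [hcost]
    rw [div_le_iff₀ (by positivity)]
    calc (∑ a, c (π a, ρ (σ a))) ≤ ∑ a, ∑ b, c (π a, ρ b) * M a b := hlower
      _ = (L : ℝ) * ∑ i, ∑ j, c (i, j) * γ' i j := hΦ'
      _ = (∑ i, ∑ j, c (i, j) * γ' i j) * L := by ring
  · -- quantization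
    intro i j
    refine ⟨∑ a : Fin L, if π a = i ∧ ρ (σ a) = j then 1 else 0, ?_⟩
    simp only [hγdef]
    have hk : ((∑ a : Fin L, if π a = i ∧ ρ (σ a) = j then 1 else 0 : ℕ) : ℝ)
        = ∑ a : Fin L, if π a = i ∧ ρ (σ a) = j then (1:ℝ) else 0 := by
      push_cast
      rfl
    rw [← hk]
    set k : ℝ := ((∑ a : Fin L, if π a = i ∧ ρ (σ a) = j then 1 else 0 : ℕ) : ℝ)
    rw [div_eq_div_iff hLR (by positivity)]
    linear_combination (-k) * hLgR
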